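/- Let ω₁, ω₂ ∈ ℂ with Im(ω₁/ω₂) > 0, Λ = {m·ω₁ + n·ω₂ : m, n ∈ ℤ}, and R = {r ∈ ℂ : r·Λ ⊆ Λ}. The map Φ : R × (ℂ/Λ) → (ℂ/Λ → ℂ/Λ) sending (r, [a]) to the induced map f̄_{r,a} : [z] ↦ [r·z + a] is well defined and injective, its image is exactly the set T of all maps of the form f̄_{a,b} with a·Λ ⊆ Λ, and Φ((r,A)·(s,B)) = Φ(r,A) ∘ Φ(s,B), where (r,[a])·(s,[b]) = (r·s, [a + r·b]). Hence the truss of endomorphisms of ℂ/Λ is isomorphic to the crossed-product truss R × (ℂ/Λ). -/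

import Mathlib

/-- The lattice `Λ(ω₁, ω₂) = {m·ω₁ + n·ω₂ : m, n ∈ ℤ}` as an additive subgroup of `ℂ`. -/
noncomputable def lattice (ω₁ ω₂ : ℂ) : AddSubgroup ℂ where
  carrier := {z : ℂ | ∃ m n : ℤ, z = m * ω₁ + n * ω₂}
  zero_mem' := ⟨0, 0, by simp⟩
  add_mem' := by
    rintro x y ⟨m, n, rfl⟩ ⟨m', n', rfl⟩
    exact ⟨m + m', n + n', by push_cast; ring⟩
  neg_mem' := by
    rintro x ⟨m, n, rfl⟩
    exact ⟨-m, -n, by push_cast; ring⟩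

/-- For `r ∈ ℂ` with `r·Λ ⊆ Λ`, the map `r̄ : ℂ/Λ → ℂ/Λ`, `[a] ↦ [r·a]`, induced by
multiplication by `r`. -/
noncomputable def rbar (ω₁ ω₂ r : ℂ)
    (hr : ∀ α ∈ lattice ω₁ ω₂, r * α ∈ lattice ω₁ ω₂) :
    ℂ ⧸ lattice ω₁ ω₂ → ℂ ⧸ lattice ω₁ ω₂ :=
  Quotient.map' (fun z => r * z) (fun x y hxy => by
    rw [QuotientAddGroup.leftRel_apply] at hxy ⊢
    have h : -(r * x) + r * y = r * (-x + y) := by ring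
    rw [h]
    exact hr _ hxy)

/-- The set `R = {r : r·Λ ⊆ Λ}` is closed under `r - s + t`. -/
theorem sub_add_mem_R {ω₁ ω₂ r s t : ℂ}
    (hr : ∀ α ∈ lattice ω₁ ω₂, r * α ∈ lattice ω₁ ω₂)
    (hs : ∀ α ∈ lattice ω₁ ω₂, s * α ∈ lattice ω₁ ω₂)
    (ht : ∀ α ∈ lattice ω₁ ω₂, t * α ∈ lattice ω₁ ω₂) :
    ∀ α ∈ lattice ω₁ ω₂, (r - s + t) * α ∈ lattice ω₁ ω₂ := fun α hα => by
  have h : (r - s + t) * α = r * α - s * α + t * α := by ring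
  rw [h]
  exact add_mem (sub_mem (hr α hα) (hs α hα)) (ht α hα)

/-- The set `R = {r : r·Λ ⊆ Λ}` is closed under multiplication. -/
theorem mul_mem_R {ω₁ ω₂ r s : ℂ}
    (hr : ∀ α ∈ lattice ω₁ ω₂, r * α ∈ lattice ω₁ ω₂)
    (hs : ∀ α ∈ lattice ω₁ ω₂, s * α ∈ lattice ω₁ ω₂) :
    ∀ α ∈ lattice ω₁ ω₂, (r * s) * α ∈ lattice ω₁ ω₂ := fun α hα => by
  rw [mul_assoc]; exact hr _ (hs _ hα)

/-- The multiplier ring `R = {r ∈ ℂ : r·Λ ⊆ Λ}` as a subtype. -/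
def Rmul (ω₁ ω₂ : ℂ) : Type :=
  {r : ℂ // ∀ α ∈ lattice ω₁ ω₂, r * α ∈ lattice ω₁ ω₂}

/-- The map `Φ : R × (ℂ/Λ) → (ℂ/Λ → ℂ/Λ)` sending `(r, [a])` to `f̄_{r,a} : [z] ↦ [r·z + a]`,
i.e. `Φ (r, A) = (X ↦ r̄ X + A)`. -/
noncomputable def Phi (ω₁ ω₂ : ℂ) (x : Rmul ω₁ ω₂ × (ℂ ⧸ lattice ω₁ ω₂)) :
    ℂ ⧸ lattice ω₁ ω₂ → ℂ ⧸ lattice ω₁ ω₂ :=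
  fun X => rbar ω₁ ω₂ x.1.1 x.1.2 X + x.2

/-- The crossed-product multiplication `(r, [a])·(s, [b]) = (r·s, [a + r·b])`, i.e.
`(r, A)·(s, B) = (r·s, A + r̄ B)`, on `R × (ℂ/Λ)`. -/
noncomputable def tmul0 (ω₁ ω₂ : ℂ) (x y : Rmul ω₁ ω₂ × (ℂ ⧸ lattice ω₁ ω₂)) :
    Rmul ω₁ ω₂ × (ℂ ⧸ lattice ω₁ ω₂) :=
  (⟨x.1.1 * y.1.1, mul_mem_R x.1.2 y.1.2⟩, x.2 + rbar ω₁ ω₂ x.1.1 x.1.2 y.2)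

section Helpers

lemma rbar_mk (ω₁ ω₂ r : ℂ) (hr : ∀ α ∈ lattice ω₁ ω₂, r * α ∈ lattice ω₁ ω₂) (z : ℂ) :
    rbar ω₁ ω₂ r hr ((z : ℂ ⧸ lattice ω₁ ω₂)) = ((r * z : ℂ) : ℂ ⧸ lattice ω₁ ω₂) := rfl

lemma Phi_mk (ω₁ ω₂ : ℂ) (r : Rmul ω₁ ω₂) (a z : ℂ) :
    Phi ω₁ ω₂ (r, ((a : ℂ ⧸ lattice ω₁ ω₂))) ((z : ℂ ⧸ lattice ω₁ ω₂)) =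
      ((r.1 * z + a : ℂ) : ℂ ⧸ lattice ω₁ ω₂) := by
  show rbar ω₁ ω₂ r.1 r.2 _ + _ = _
  rw [rbar_mk, ← QuotientAddGroup.mk_add]

lemma key (ω₁ ω₂ : ℂ) (hτ : 0 < (ω₁ / ω₂).im) (d : ℂ)
    (h : ∀ z : ℂ, d * z ∈ lattice ω₁ ω₂) : d = 0 := by
  by_contra hd
  have hω₂ : ω₂ ≠ 0 := by
    intro h0
    rw [h0, div_zero] at hτ
    simp at hτ
  obtain ⟨m, n, hmn⟩ := h ((ω₂ / 2) / d)
  rw [mul_div_cancel₀ _ hd] at hmn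
  rcases eq_or_ne m 0 with rfl | hm
  · simp only [Int.cast_zero, zero_mul, zero_add] at hmn
    have h2 : (2 * (n : ℂ) - 1) * ω₂ = 0 := by linear_combination (-2 : ℂ) * hmn
    have h3 : 2 * (n : ℂ) - 1 = 0 := by
      rcases mul_eq_zero.mp h2 with h | h
      · exact h
      · exact absurd h hω₂
    have : (2 * n - 1 : ℤ) = 0 := by exact_mod_cast h3
    omega
  · have hm' : (m : ℂ) ≠ 0 := Int.cast_ne_zero.mpr hm
    have h1 : ω₁ / ω₂ = ((((1 / 2 - (n : ℝ)) / (m : ℝ)) : ℝ) : ℂ) := by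
      push_cast
      field_simp
      linear_combination (-2 : ℂ) * hmn
    rw [h1] at hτ
    simp at hτ

end Helpers

/-- `Φ : R × (ℂ/Λ) → (ℂ/Λ → ℂ/Λ)`, `(r, [a]) ↦ ([z] ↦ [r·z + a])`, is well defined and
injective, its range is exactly the set of maps of the form `f̄_{a,b}` with `a·Λ ⊆ Λ`, and it
turns the crossed-product multiplication into composition: the truss of endomorphisms of
`ℂ/Λ` is isomorphic to the crossed-product truss `R × (ℂ/Λ)`. -/
theorem Phi_truss_isomorphism (ω₁ ω₂ : ℂ) (hτ : 0 < (ω₁ / ω₂).im) :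
    (∀ (r : Rmul ω₁ ω₂) (a z : ℂ),
      Phi ω₁ ω₂ (r, ((a : ℂ ⧸ lattice ω₁ ω₂))) ((z : ℂ ⧸ lattice ω₁ ω₂)) =
        ((r.1 * z + a : ℂ) : ℂ ⧸ lattice ω₁ ω₂)) ∧
    Function.Injective (Phi ω₁ ω₂) ∧
    Set.range (Phi ω₁ ω₂) =
      {f : ℂ ⧸ lattice ω₁ ω₂ → ℂ ⧸ lattice ω₁ ω₂ |
        ∃ a b : ℂ, (∀ α ∈ lattice ω₁ ω₂, a * α ∈ lattice ω₁ ω₂) ∧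
          ∀ z : ℂ, f ((z : ℂ ⧸ lattice ω₁ ω₂)) = ((a * z + b : ℂ) : ℂ ⧸ lattice ω₁ ω₂)} ∧
    (∀ x y : Rmul ω₁ ω₂ × (ℂ ⧸ lattice ω₁ ω₂),
      Phi ω₁ ω₂ (tmul0 ω₁ ω₂ x y) = Phi ω₁ ω₂ x ∘ Phi ω₁ ω₂ y) := by
  refine ⟨fun r a z => Phi_mk ω₁ ω₂ r a z, ?_, ?_, ?_⟩
  · rintro ⟨r, A⟩ ⟨s, B⟩ h
    obtain ⟨a, rfl⟩ := QuotientAddGroup.mk_surjective A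
    obtain ⟨b, rfl⟩ := QuotientAddGroup.mk_surjective B
    have hAB : ∀ z : ℂ, ((r.1 * z + a : ℂ) : ℂ ⧸ lattice ω₁ ω₂) = ((s.1 * z + b : ℂ) : ℂ ⧸ lattice ω₁ ω₂) := by
      intro z
      rw [← Phi_mk, ← Phi_mk, h]
    have h0 := hAB 0
    simp only [mul_zero, zero_add] at h0
    have hrs : r.1 = s.1 := by
      have hd : ∀ z : ℂ, (s.1 - r.1) * z ∈ lattice ω₁ ω₂ := by
        intro z
        have := hAB z
        rw [QuotientAddGroup.eq] at this
        rw [QuotientAddGroup.eq] at h0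
        have h2 : (s.1 - r.1) * z = (-(r.1 * z + a) + (s.1 * z + b)) - (-a + b) := by ring
        rw [h2]
        exact sub_mem this h0
      have := key ω₁ ω₂ hτ _ hd
      have : s.1 = r.1 := by linear_combination this
      exact this.symm
    refine Prod.ext (Subtype.ext hrs) ?_
    have := hAB 0
    simpa [hrs] using this
  · ext f
    constructor
    · rintro ⟨⟨r, A⟩, rfl⟩
      obtain ⟨a, rfl⟩ := QuotientAddGroup.mk_surjective A
      exact ⟨r.1, a, r.2, fun z => Phi_mk ω₁ ω₂ r a z⟩
    · rintro ⟨a, b, ha, hf⟩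
      refine ⟨(⟨a, ha⟩, ((b : ℂ ⧸ lattice ω₁ ω₂))), ?_⟩
      funext X
      induction X using QuotientAddGroup.induction_on with
      | H z => exact (Phi_mk ω₁ ω₂ ⟨a, ha⟩ b z).trans (hf z).symm
  · rintro ⟨⟨r, hr⟩, A⟩ ⟨⟨s, hs⟩, B⟩
    obtain ⟨a, rfl⟩ := QuotientAddGroup.mk_surjective A
    obtain ⟨b, rfl⟩ := QuotientAddGroup.mk_surjective B
    funext X
    induction X using QuotientAddGroup.induction_on with
    | H z =>
      show Phi ω₁ ω₂ (⟨r * s, _⟩, _ + rbar ω₁ ω₂ r hr _) _ = _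
      rw [rbar_mk, ← QuotientAddGroup.mk_add]
      rw [Phi_mk ω₁ ω₂ ⟨r * s, _⟩ (a + r * b) z]
      show _ = Phi ω₁ ω₂ (⟨r, hr⟩, _) (Phi ω₁ ω₂ (⟨s, hs⟩, _) _)
      rw [Phi_mk ω₁ ω₂ ⟨s, hs⟩ b z, Phi_mk ω₁ ω₂ ⟨r, hr⟩ a (s * z + b)]
      congr 1
      ring
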